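/- Let Γ ⊂ ℂⁿ be compact. The union Σ of all p-pseudoconcave subsets of ℂⁿ \ Γ which are bounded in ℂⁿ is itself a bounded p-pseudoconcave subset of ℂⁿ \ Γ, hence the largest element of this family. -/

import Mathlib

open MeasureTheory Metric Set Filter Bornology Topology

noncomputable section

/-- `ℂⁿ` with its Euclidean structure. -/
abbrev CSp (n : ℕ) := EuclideanSpace ℂ (Fin n)

instance (n : ℕ) : MeasureSpace (CSp n) :=
  ⟨(volume : Measure (∀ _ : Fin n, ℂ)).map (WithLp.toLp 2)⟩
instance (n : ℕ) : BorelSpace (CSp n) := (inferInstance : BorelSpace (PiLp 2 (fun _ : Fin n => ℂ)))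
/-- The union of the unbounded connected components of the complement of `K` in `ℂᵖ`. -/
def unbddCompl {p : ℕ} (K : Set (CSp p)) : Set (CSp p) :=
  ⋃₀ {C | C ⊆ Kᶜ ∧ IsConnected C ∧ ¬Bornology.IsBounded C}

/-- `U` is relatively open in `V`. -/
def RelOpen {n : ℕ} (V U : Set (CSp n)) : Prop := ∃ O, IsOpen O ∧ U = V ∩ O

/-- `f` is holomorphic along `V` on `W ⊆ V`: near each point of `W` it extends to a
holomorphic map of a full neighbourhood in `ℂⁿ` (for `V` open this is just holomorphy on `W`;
for `V` a submanifold this is the usual notion of holomorphy on `V`). -/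
def HolomorphicAlong {n q : ℕ} (V W : Set (CSp n)) (f : CSp n → CSp q) : Prop :=
  ∀ a ∈ W, ∃ O : Set (CSp n), IsOpen O ∧ a ∈ O ∧
    ∃ g : CSp n → CSp q, DifferentiableOn ℂ g O ∧ ∀ x ∈ O ∩ V, g x = f x

/-- `X` is a `p`-pseudoconcave subset of (the complex manifold) `V`: `X` is closed in `V` and
for every relatively open `U ⊂⊂ V` and every holomorphic map `f` from a neighbourhood of the
closure of `U` (in `V`) into `ℂᵖ`, `f(X ∩ U)` avoids the unbounded component of
`ℂᵖ \ f(X ∩ ∂U)`, where `∂U = closure U \ U` is the boundary of `U` in `V`. -/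
def IsPseudoconcave {n : ℕ} (p : ℕ) (V X : Set (CSp n)) : Prop :=
  X ⊆ V ∧ (V ∩ closure X ⊆ X) ∧
  ∀ U : Set (CSp n), RelOpen V U → IsCompact (closure U) → closure U ⊆ V →
    ∀ W : Set (CSp n), RelOpen V W → closure U ⊆ W →
      ∀ f : CSp n → CSp p, HolomorphicAlong V W f →
        f '' (X ∩ U) ⊆ (unbddCompl (f '' (X ∩ (closure U \ U))))ᶜ
lemma unbddCompl_anti {p : ℕ} {K₁ K₂ : Set (CSp p)} (h : K₁ ⊆ K₂) :
    unbddCompl K₂ ⊆ unbddCompl K₁ := by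
  rintro z ⟨C, ⟨hC1, hC2, hC3⟩, hzC⟩
  exact ⟨C, ⟨hC1.trans (compl_subset_compl.2 h), hC2, hC3⟩, hzC⟩


lemma ray_unbounded {p : ℕ} (z e : CSp p) (he : ‖e‖ = 1) :
    ¬ Bornology.IsBounded ((fun t : ℝ => z + (t:ℂ) • e) '' Ici 0) := by
  intro h
  obtain ⟨r, hr⟩ := h.subset_closedBall 0
  set t : ℝ := |r| + ‖z‖ + 1 with ht
  have htmem : (t : ℝ) ∈ Ici (0:ℝ) := by
    have := abs_nonneg r
    have := norm_nonneg z
    simp only [mem_Ici, ht]; linarith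
  have := hr (mem_image_of_mem _ htmem)
  rw [mem_closedBall_zero_iff] at this
  have h1 : ‖(t:ℂ) • e‖ = t := by
    rw [norm_smul, he, mul_one, Complex.norm_real, Real.norm_eq_abs, abs_of_nonneg]
    positivity
  have h2 : t - ‖z‖ ≤ ‖z + (t:ℂ) • e‖ := by
    have h3 : ‖(t:ℂ) • e‖ ≤ ‖z + (t:ℂ) • e‖ + ‖z‖ := by
      have h4 := norm_sub_le (z + (t:ℂ) • e) z
      have h5 : z + (t:ℂ) • e - z = (t:ℂ) • e := by abel
      rw [h5] at h4
      linarith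
    rw [h1] at h3
    linarith
  have : t - ‖z‖ ≤ r := h2.trans this
  have : |r| + 1 ≤ r := by linarith
  have := abs_nonneg r
  have := le_abs_self r
  linarith


lemma pc_bounded_in_ball {n : ℕ} {p : ℕ} (hp : 1 ≤ p) {Γ : Set (CSp n)}
    {R : ℝ} (hR0 : 0 < R) (hΓR : Γ ⊆ ball 0 R) {S : Set (CSp n)}
    (hS : IsPseudoconcave p Γᶜ S) (hSb : Bornology.IsBounded S) :
    S ⊆ closedBall 0 R := by
  by_contra hcon
  obtain ⟨x₁, hx₁S, hx₁R⟩ : ∃ x ∈ S, R < ‖x‖ := by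
    rw [not_subset] at hcon
    obtain ⟨x, hx, hx'⟩ := hcon
    exact ⟨x, hx, by simpa [mem_closedBall_zero_iff, not_le] using hx'⟩
  have hTc : IsCompact (closure S) := hSb.isCompact_closure
  obtain ⟨x₀, hx₀T, hmax⟩ := hTc.exists_isMaxOn ⟨x₁, subset_closure hx₁S⟩
    (continuous_norm.continuousOn)
  set M : ℝ := ‖x₀‖ with hM
  have hnormle : ∀ y ∈ closure S, ‖y‖ ≤ M := fun y hy => hmax hy
  have hRM : R < M := hx₁R.trans_le (hnormle x₁ (subset_closure hx₁S))
  have hM0 : 0 < M := hR0.trans hRM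
  have hx₀Γ : x₀ ∈ Γᶜ := by
    intro hx₀Γ
    have := hΓR hx₀Γ
    rw [mem_ball_zero_iff] at this
    exact absurd this (not_lt.2 hRM.le)
  have hx₀S : x₀ ∈ S := hS.2.1 ⟨hx₀Γ, hx₀T⟩
  -- the peak functional
  set ℓ : CSp n → ℂ := fun x => inner (𝕜 := ℂ) x₀ x with hℓ
  have hℓcont : Continuous fun x => (ℓ x).re :=
    Complex.continuous_re.comp (innerSL ℂ x₀).continuous
  have hℓx₀ : (ℓ x₀).re = M ^ 2 := by
    simpa [hℓ] using inner_self_eq_norm_sq (𝕜 := ℂ) x₀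
  have hℓle : ∀ x : CSp n, (ℓ x).re ≤ M * ‖x‖ := by
    intro x
    have h1 : (ℓ x).re ≤ ‖ℓ x‖ := by
      simpa using Complex.re_le_norm (ℓ x)
    exact h1.trans (norm_inner_le_norm x₀ x)
  set c : ℝ := M ^ 2 - M * (M - R) / 2 with hc
  have hcM2 : c < M ^ 2 := by
    rw [hc]; nlinarith [mul_pos hM0 (sub_pos.2 hRM)]
  have hMRc : M * R < c := by
    rw [hc]; nlinarith [mul_pos hM0 (sub_pos.2 hRM)]
  set U : Set (CSp n) := ball (0 : CSp n) (M + 1) ∩ {x | c < (ℓ x).re} with hU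
  have hUopen : IsOpen U := isOpen_ball.inter (isOpen_lt continuous_const hℓcont)
  have hΓlt : ∀ x ∈ Γ, (ℓ x).re < c := by
    intro x hx
    have h1 : ‖x‖ < R := mem_ball_zero_iff.1 (hΓR hx)
    calc (ℓ x).re ≤ M * ‖x‖ := hℓle x
      _ < M * R := by nlinarith
      _ < c := hMRc
  have hclU : closure U ⊆ closedBall 0 (M + 1) ∩ {x | c ≤ (ℓ x).re} := by
    apply closure_minimal
    · exact inter_subset_inter ball_subset_closedBall
        (fun x (hx : c < _) => (le_of_lt hx : c ≤ _))
    · exact IsClosed.inter isClosed_closedBall (isClosed_le continuous_const hℓcont)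
  have hclUΓ : closure U ⊆ Γᶜ := fun x hx hxΓ => absurd (hclU hx).2 (not_le.2 (hΓlt x hxΓ))
  have hUΓ : U ⊆ Γᶜ := subset_closure.trans hclUΓ
  have hUrel : RelOpen Γᶜ U := ⟨U, hUopen, (inter_eq_self_of_subset_right hUΓ).symm⟩
  have hUcomp : IsCompact (closure U) :=
    (isBounded_ball.subset inter_subset_left).isCompact_closure
  have hWrel : RelOpen Γᶜ Γᶜ := ⟨univ, isOpen_univ, (inter_univ _).symm⟩
  set i0 : Fin p := ⟨0, hp⟩ with hi0
  set e : CSp p := EuclideanSpace.single i0 (1 : ℂ) with he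
  have hei0 : e i0 = 1 := by simp [he]
  have hee : ‖e‖ = 1 := by simp [he]
  set f : CSp n → CSp p := fun x => (ℓ x) • e with hf
  have hfdiff : Differentiable ℂ f := by
    have : Differentiable ℂ fun x : CSp n => ℓ x := (innerSL ℂ x₀).differentiable
    exact this.smul_const e
  have hHol : HolomorphicAlong Γᶜ Γᶜ f := fun a _ =>
    ⟨univ, isOpen_univ, mem_univ a, f, hfdiff.differentiableOn, fun x _ => rfl⟩
  have key := hS.2.2 U hUrel hUcomp hclUΓ Γᶜ hWrel hclUΓ f hHol
  have hx₀U : x₀ ∈ U := by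
    constructor
    · rw [mem_ball_zero_iff]; linarith
    · rw [mem_setOf_eq, hℓx₀]; exact hcM2
  have hfx₀ : f x₀ ∈ f '' (S ∩ U) := mem_image_of_mem f ⟨hx₀S, hx₀U⟩
  apply key hfx₀
  -- the ray witness
  refine ⟨(fun t : ℝ => f x₀ + (t:ℂ) • e) '' Ici 0, ⟨?_, ?_, ray_unbounded _ _ hee⟩, ?_⟩
  · rintro z ⟨t, ht, rfl⟩ ⟨x, ⟨hxS, hxcl, hxnU⟩, hfx⟩
    -- x ∈ S ∩ (closure U \ U) and f x = f x₀ + t • e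
    have hxM : ‖x‖ ≤ M := hnormle x (subset_closure hxS)
    have hxball : x ∈ ball (0 : CSp n) (M + 1) := by rw [mem_ball_zero_iff]; linarith
    have hxlec : (ℓ x).re ≤ c := by
      by_contra hgt
      exact hxnU ⟨hxball, not_le.1 hgt⟩
    have hfx' : f x = f x₀ + (t:ℂ) • e := hfx
    have h1 : (f x) i0 = ℓ x := by simp [hf, hei0]
    have h2 : ((f x₀ + (t:ℂ) • e) i0) = ℓ x₀ + t := by
      simp [hf, hei0]
    rw [hfx'] at h1
    rw [h1] at h2
    have h3 : (ℓ x).re = M ^ 2 + t := by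
      have := congrArg Complex.re h2
      simpa [hℓx₀] using this
    rw [mem_Ici] at ht
    nlinarith
  · exact (isConnected_Ici).image _
      (continuous_const.add ((Complex.continuous_ofReal).smul continuous_const)).continuousOn
  · exact ⟨0, mem_Ici.2 le_rfl, by simp⟩


/-- For `Γ ⊆ ℂⁿ` compact, the union `Σ` of all `p`-pseudoconcave subsets of
`ℂⁿ \ Γ` that are bounded in `ℂⁿ` is itself a bounded `p`-pseudoconcave subset of `ℂⁿ \ Γ`,
hence the largest element of this family. (`Γ ∪ Σ` is the polynomial `p`-hull of `Γ`.) -/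
theorem biggest_pseudoconcave {n : ℕ} (p : ℕ) (hp : 1 ≤ p)
    (Γ : Set (CSp n)) (hΓ : IsCompact Γ) :
    IsPseudoconcave p Γᶜ
        (⋃₀ {S | IsPseudoconcave p Γᶜ S ∧ Bornology.IsBounded S}) ∧
      Bornology.IsBounded (⋃₀ {S | IsPseudoconcave p Γᶜ S ∧ Bornology.IsBounded S}) ∧
      ∀ S, IsPseudoconcave p Γᶜ S → Bornology.IsBounded S →
        S ⊆ ⋃₀ {S | IsPseudoconcave p Γᶜ S ∧ Bornology.IsBounded S} := by
  set F : Set (Set (CSp n)) := {S | IsPseudoconcave p Γᶜ S ∧ Bornology.IsBounded S} with hF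
  set Sig : Set (CSp n) := ⋃₀ F with hSg
  -- a uniform ball around Γ
  obtain ⟨r, hr⟩ := hΓ.isBounded.subset_ball 0
  set R : ℝ := max r 1 with hR
  have hR0 : (0:ℝ) < R := lt_of_lt_of_le one_pos (le_max_right r 1)
  have hΓR : Γ ⊆ ball 0 R := hr.trans (ball_subset_ball (le_max_left r 1))
  have hbd : ∀ S ∈ F, S ⊆ closedBall 0 R := fun S hS =>
    pc_bounded_in_ball hp hR0 hΓR hS.1 hS.2
  have hSgbd : Sig ⊆ closedBall 0 R := sUnion_subset hbd
  have hSgbdd : Bornology.IsBounded Sig := isBounded_closedBall.subset hSgbd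
  have hSgV : Sig ⊆ Γᶜ := sUnion_subset fun S hS => hS.1.1
  -- the image condition for Sig
  have hcond : ∀ U : Set (CSp n), RelOpen Γᶜ U → IsCompact (closure U) → closure U ⊆ Γᶜ →
      ∀ W : Set (CSp n), RelOpen Γᶜ W → closure U ⊆ W →
        ∀ f : CSp n → CSp p, HolomorphicAlong Γᶜ W f →
          f '' (Sig ∩ U) ⊆ (unbddCompl (f '' (Sig ∩ (closure U \ U))))ᶜ := by
    intro U hU hUc hUV W hW hUW f hf
    rintro _ ⟨x, ⟨hxSg, hxU⟩, rfl⟩ hmem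
    obtain ⟨S, hSF, hxS⟩ := hxSg
    have hsub : S ∩ (closure U \ U) ⊆ Sig ∩ (closure U \ U) :=
      inter_subset_inter_left _ (subset_sUnion_of_mem hSF)
    exact hSF.1.2.2 U hU hUc hUV W hW hUW f hf (mem_image_of_mem f ⟨hxS, hxU⟩)
      (unbddCompl_anti (image_mono hsub) hmem)
  -- the closure of Sig inside Γᶜ is itself in the family
  set T : Set (CSp n) := Γᶜ ∩ closure Sig with hT
  have hSgT : Sig ⊆ T := fun x hx => ⟨hSgV hx, subset_closure hx⟩
  have hTF : T ∈ F := by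
    constructor
    · refine ⟨inter_subset_left, ?_, ?_⟩
      · intro x hx
        exact ⟨hx.1, closure_closure (s := Sig) ▸ closure_mono inter_subset_right hx.2⟩
      · intro U hU hUc hUV W hW hUW f hf
        rintro _ ⟨y, ⟨hyT, hyU⟩, rfl⟩ hmem
        obtain ⟨C, ⟨hC1, hC2, hC3⟩, hfyC⟩ := hmem
        -- the boundary is compact and disjoint from Γ
        obtain ⟨OU, hOU, hUeq⟩ := id hU
        have hbdry : closure U \ U = closure U ∩ OUᶜ := by
          apply Subset.antisymm
          · rintro z ⟨hz1, hz2⟩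
            refine ⟨hz1, fun hzO => hz2 ?_⟩
            rw [hUeq]
            exact ⟨hUV hz1, hzO⟩
          · rintro z ⟨hz1, hz2⟩
            refine ⟨hz1, fun hzU => hz2 ?_⟩
            rw [hUeq] at hzU
            exact hzU.2
        have hbdry_closed : IsClosed (closure U \ U) := by
          rw [hbdry]; exact isClosed_closure.inter (hOU.isClosed_compl)
        have hTbd : T ∩ (closure U \ U) = closure Sig ∩ (closure U \ U) := by
          ext z
          simp only [hT, mem_inter_iff, mem_compl_iff, and_assoc]
          constructor
          · rintro ⟨h1, h2, h3⟩; exact ⟨h2, h3⟩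
          · rintro ⟨h2, h3⟩; exact ⟨fun hzΓ => (hUV h3.1) hzΓ, h2, h3⟩
        have hTcomp : IsCompact (T ∩ (closure U \ U)) := by
          rw [hTbd]
          exact hUc.of_isClosed_subset (isClosed_closure.inter hbdry_closed)
            (fun z hz => hz.2.1)
        -- f is continuous on this compact set
        have hfcont : ContinuousOn f (T ∩ (closure U \ U)) := by
          intro a ha
          obtain ⟨O, hO, haO, g, hg, hgf⟩ := hf a (hUW ha.2.1)
          have hga : ContinuousAt g a := (hg.continuousOn.continuousAt (hO.mem_nhds haO))
          apply hga.continuousWithinAt.congr_of_eventuallyEq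
          · filter_upwards [mem_nhdsWithin_of_mem_nhds (hO.mem_nhds haO),
              self_mem_nhdsWithin] with z hzO hzT
            exact (hgf z ⟨hzO, hzT.1.1⟩).symm
          · exact (hgf a ⟨haO, ha.1.1⟩).symm
        have hKcomp : IsCompact (f '' (T ∩ (closure U \ U))) :=
          hTcomp.image_of_continuousOn hfcont
        -- a small ball around f y inside the complement of the compact image
        have hfyK : f y ∈ (f '' (T ∩ (closure U \ U)))ᶜ := hC1 hfyC
        obtain ⟨ρ, hρ0, hρ⟩ := Metric.isOpen_iff.1 hKcomp.isClosed.isOpen_compl _ hfyK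
        -- continuity of f near y along Γᶜ
        obtain ⟨O₁, hO₁, hyO₁, g, hg, hgf⟩ := hf y (hUW (subset_closure hyU))
        have hgc : ContinuousAt g y := hg.continuousOn.continuousAt (hO₁.mem_nhds hyO₁)
        obtain ⟨δ, hδ0, hδ⟩ := Metric.continuousAt_iff.1 hgc ρ hρ0
        -- pick a point of Sig near y
        have hUopen : IsOpen U := by
          rw [hUeq]; exact (hΓ.isClosed.isOpen_compl).inter hOU
        have hyScl : y ∈ closure Sig := hyT.2
        have hN : y ∈ U ∩ O₁ ∩ ball y δ :=
          ⟨⟨hyU, hyO₁⟩, mem_ball_self hδ0⟩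
        obtain ⟨x, hxN, hxSg⟩ := _root_.mem_closure_iff.1 hyScl _
          ((hUopen.inter hO₁).inter isOpen_ball) hN
        have hxΓ : x ∈ Γᶜ := hSgV hxSg
        have hfx : f x = g x := (hgf x ⟨hxN.1.2, hxΓ⟩).symm
        have hfy' : f y = g y := (hgf y ⟨hyO₁, hyT.1⟩).symm
        have hfxball : f x ∈ ball (f y) ρ := by
          rw [mem_ball, hfx, hfy']
          exact hδ (mem_ball.1 hxN.2)
        -- build the connected unbounded witness through f x
        have hsubK : f '' (Sig ∩ (closure U \ U)) ⊆ f '' (T ∩ (closure U \ U)) :=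
          image_mono (inter_subset_inter_left _ hSgT)
        have hball_sub : ball (f y) ρ ⊆ (f '' (Sig ∩ (closure U \ U)))ᶜ :=
          fun z hz => fun hzK => (hρ hz) (hsubK hzK)
        have hC_sub : C ⊆ (f '' (Sig ∩ (closure U \ U)))ᶜ :=
          hC1.trans (compl_subset_compl.2 hsubK)
        have hwit : f x ∈ unbddCompl (f '' (Sig ∩ (closure U \ U))) := by
          refine ⟨C ∪ ball (f y) ρ, ⟨union_subset hC_sub hball_sub, ?_, ?_⟩,
            Or.inr hfxball⟩
          · exact hC2.union ⟨f y, hfyC, mem_ball_self hρ0⟩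
              ((convex_ball _ _).isConnected ⟨f y, mem_ball_self hρ0⟩)
          · exact fun hb => hC3 (hb.subset subset_union_left)
        exact hcond U hU hUc hUV W hW hUW f hf
          (mem_image_of_mem f ⟨hxSg, hxN.1.1⟩) hwit
    · exact isBounded_closedBall.subset
        ((inter_subset_right).trans (closure_minimal hSgbd isClosed_closedBall))
  refine ⟨⟨hSgV, ?_, hcond⟩, hSgbdd, fun S hS hb => subset_sUnion_of_mem ⟨hS, hb⟩⟩
  exact fun x hx => subset_sUnion_of_mem hTF hx
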